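/- Let n ≥ 3, (T, Σ, ⟠) an n-angulated category, A a full subcategory closed under extensions, and let E and F be almost n-exact structures for A. (1) If there are enough E-injective morphisms, then F ⊆ E if and only if E-inj ⊆ F-inj. (2) If there are enough E-projective morphisms, then F ⊆ E if and only if E-proj ⊆ F-proj. -/

import Mathlib

/-!
Common framework: `n`-angulated categories (Geiss–Keller–Oppermann), almost `n`-exact
structures on an extension closed subcategory, ideals, phantom ideals, (special)
precovers/preenvelopes, relative phantoms, pullback/pushout almost `n`-exact structures.
-/

open CategoryTheory CategoryTheory.Limits ZeroObject

universe v u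

namespace IdealApprox

/-- An `n`-`Σ`-sequence `A₁ → A₂ → ⋯ → Aₙ → ΣA₁` in `T`.  The objects are
`obj 0, …, obj (n-1)`; `mor i : obj i ⟶ obj (i+1)` for `i ≤ n - 2` are the structure
morphisms (indices `≥ n - 1` are junk), and `phantom : obj (n-1) ⟶ S.obj (obj 0)`
is the last morphism `αₙ`. -/
structure NSeq (n : ℕ) (T : Type u) [Category.{v} T] (S : T ⥤ T) where
  obj : ℕ → T
  mor : ∀ i : ℕ, obj i ⟶ obj (i + 1)
  phantom : obj (n - 1) ⟶ S.obj (obj 0)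

/-- A morphism of `n`-`Σ`-sequences. -/
structure NSeqHom {n : ℕ} {T : Type u} [Category.{v} T] {S : T ⥤ T}
    (d e : NSeq n T S) where
  app : ∀ i : ℕ, d.obj i ⟶ e.obj i
  comm : ∀ i : ℕ, i + 2 ≤ n → app i ≫ e.mor i = d.mor i ≫ app (i + 1)
  comm_phantom : app (n - 1) ≫ e.phantom = d.phantom ≫ S.map (app 0)

section Defs

variable {n : ℕ} {T : Type u} [Category.{v} T] [Preadditive T] [HasZeroObject T]
  [HasBinaryBiproducts T] {S : T ⥤ T}

/-- The componentwise direct sum of two `n`-`Σ`-sequences. -/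
noncomputable def biprodSeq (d e : NSeq n T S) : NSeq n T S where
  obj i := d.obj i ⊞ e.obj i
  mor i := biprod.map (d.mor i) (e.mor i)
  phantom := biprod.desc (d.phantom ≫ S.map biprod.inl) (e.phantom ≫ S.map biprod.inr)

/-- The trivial `n`-`Σ`-sequence `A = A → 0 → ⋯ → 0 → ΣA`. -/
noncomputable def trivialNSeq (A : T) : NSeq n T S where
  obj i := match i with
    | 0 => A
    | 1 => A
    | _ + 2 => 0
  mor i := match i with
    | 0 => 𝟙 A
    | _ + 1 => 0
  phantom := 0

/-- `e` is the left rotation `A₂ → A₃ → ⋯ → Aₙ → ΣA₁ → ΣA₂` (with last morphism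
`(-1)ⁿ Σα₁`) of `d`. -/
structure IsLeftRotation (d e : NSeq n T S) : Prop where
  hn : 3 ≤ n
  obj_eq : ∀ i : ℕ, i + 2 ≤ n → e.obj i = d.obj (i + 1)
  obj_last : e.obj (n - 1) = S.obj (d.obj 0)
  mor_eq : ∀ (i : ℕ) (h3 : i + 3 ≤ n),
    e.mor i = eqToHom (obj_eq i (by omega)) ≫ d.mor (i + 1) ≫
      eqToHom (obj_eq (i + 1) (by omega)).symm
  mor_last : e.mor (n - 2) =
    eqToHom ((obj_eq (n - 2) (by omega)).trans
        (congrArg d.obj (by omega : n - 2 + 1 = n - 1))) ≫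
      d.phantom ≫
      eqToHom (obj_last.symm.trans (congrArg e.obj (by omega : n - 1 = n - 2 + 1)))
  phantom_eq : e.phantom =
    eqToHom obj_last ≫ ((-1 : ℤ) ^ n • S.map (d.mor 0)) ≫
      eqToHom (congrArg S.obj (obj_eq 0 (by omega)).symm)

/-- `c` is the mapping cone of the morphism `φ : d ⟶ e` of `n`-`Σ`-sequences, i.e.
`c` has objects `A_{i+1} ⊞ B_i` and the matrix morphisms `[(-α, 0), (φ, β)]`. -/
structure IsCone {d e : NSeq n T S} (φ : NSeqHom d e) (c : NSeq n T S) : Prop where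
  hn : 3 ≤ n
  obj_eq : ∀ i : ℕ, i + 2 ≤ n → c.obj i = (d.obj (i + 1) ⊞ e.obj i)
  obj_last : c.obj (n - 1) = (S.obj (d.obj 0) ⊞ e.obj (n - 1))
  mor_eq : ∀ (i : ℕ) (h3 : i + 3 ≤ n),
    c.mor i = eqToHom (obj_eq i (by omega)) ≫
      (biprod.map (-(d.mor (i + 1))) (e.mor i) +
        biprod.fst ≫ φ.app (i + 1) ≫ biprod.inr) ≫
      eqToHom (obj_eq (i + 1) (by omega)).symm
  mor_last : c.mor (n - 2) =
    eqToHom (obj_eq (n - 2) (by omega)) ≫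
      (biprod.map (eqToHom (congrArg d.obj (by omega : n - 2 + 1 = n - 1)) ≫
          (-(d.phantom))) (e.mor (n - 2)) +
        biprod.fst ≫ eqToHom (congrArg d.obj (by omega : n - 2 + 1 = n - 1)) ≫
          φ.app (n - 1) ≫ eqToHom (congrArg e.obj (by omega : n - 1 = n - 2 + 1)) ≫
          biprod.inr) ≫
      eqToHom (show (S.obj (d.obj 0) ⊞ e.obj (n - 2 + 1)) = c.obj (n - 2 + 1) by
        rw [show n - 2 + 1 = n - 1 from by omega]; exact obj_last.symm)
  phantom_eq : c.phantom =
    eqToHom obj_last ≫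
      biprod.desc ((-(S.map (d.mor 0))) ≫ S.map biprod.inl +
          S.map (φ.app 0) ≫ S.map biprod.inr)
        (e.phantom ≫ S.map biprod.inr) ≫
      eqToHom (congrArg S.obj (obj_eq 0 (by omega)).symm)

/-- The axioms (F1)–(F4) for a class `Ang` of `n`-`Σ`-sequences to be an
`n`-angulation of `(T, S)`; the members of `Ang` are the `n`-angles. -/
structure IsNAngulated (Ang : Set (NSeq n T S)) : Prop where
  /-- (F1)(a): closed under direct sums. -/
  biprod_mem : ∀ d e : NSeq n T S, d ∈ Ang → e ∈ Ang → biprodSeq d e ∈ Ang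
  /-- (F1)(a): closed under direct summands. -/
  summand_mem : ∀ d e : NSeq n T S, e ∈ Ang →
    (∃ (f : NSeqHom d e) (g : NSeqHom e d), ∀ i, f.app i ≫ g.app i = 𝟙 (d.obj i)) →
    d ∈ Ang
  /-- (F1)(b): contains the trivial sequences. -/
  trivial_mem : ∀ A : T, (trivialNSeq A : NSeq n T S) ∈ Ang
  /-- (F1)(c): every morphism is the first morphism of some `n`-angle. -/
  complete : ∀ {X Y : T} (f : X ⟶ Y), ∃ d ∈ Ang, ∃ (h0 : d.obj 0 = X) (h1 : d.obj 1 = Y),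
    d.mor 0 = eqToHom h0 ≫ f ≫ eqToHom h1.symm
  /-- (F2): closed under rotation, in both directions. -/
  rotate : ∀ d e : NSeq n T S, IsLeftRotation d e → (d ∈ Ang ↔ e ∈ Ang)
  /-- (F3)+(F4): any commutative square on the first morphisms of two `n`-angles
  extends to a morphism of `n`-angles whose mapping cone is again an `n`-angle. -/
  fill : ∀ d e : NSeq n T S, d ∈ Ang → e ∈ Ang →
    ∀ (f0 : d.obj 0 ⟶ e.obj 0) (f1 : d.obj 1 ⟶ e.obj 1),
      f0 ≫ e.mor 0 = d.mor 0 ≫ f1 →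
      ∃ φ : NSeqHom d e, φ.app 0 = f0 ∧ φ.app 1 = f1 ∧ ∃ c ∈ Ang, IsCone φ c

/-- All (meaningful) objects of the sequence `d` belong to the subcategory `A`. -/
def objsIn (A : Set T) (d : NSeq n T S) : Prop := ∀ i : ℕ, i < n → d.obj i ∈ A

/-- The class `D_A` of `n`-angles all of whose objects lie in `A`. -/
def DA (Ang : Set (NSeq n T S)) (A : Set T) : Set (NSeq n T S) :=
  {d | d ∈ Ang ∧ objsIn A d}

/-- The full subcategory `A` is closed under extensions in `(T, S, Ang)`. -/
def ClosedUnderExtensions (Ang : Set (NSeq n T S)) (A : Set T) : Prop :=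
  ∀ d ∈ Ang, d.obj 0 ∈ A → d.obj (n - 1) ∈ A → objsIn A d

/-- An almost `n`-exact structure `E ⊆ D_A` for `A`: (N1) closed under direct sums and
containing all split `n`-angles, (N2) closed under base change, (N3) closed under
cobase change. -/
structure IsAlmostNExact (Ang : Set (NSeq n T S)) (A : Set T)
    (E : Set (NSeq n T S)) : Prop where
  subset_DA : E ⊆ DA Ang A
  sum_mem : ∀ d e : NSeq n T S, d ∈ E → e ∈ E → biprodSeq d e ∈ E
  split_mem : ∀ d ∈ DA Ang A, d.phantom = 0 → d ∈ E
  base_change : ∀ d ∈ E, ∀ e ∈ DA Ang A, ∀ (φ : NSeqHom e d) (h : e.obj 0 = d.obj 0),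
    φ.app 0 = eqToHom h → e ∈ E
  cobase_change : ∀ d ∈ E, ∀ e ∈ DA Ang A,
    ∀ (φ : NSeqHom d e) (h : d.obj (n - 1) = e.obj (n - 1)),
      φ.app (n - 1) = eqToHom h → e ∈ E

/-- The class `Φ(E)` of `E`-phantoms, i.e. last morphisms of `n`-angles in `E`. -/
def phant (E : Set (NSeq n T S)) : MorphismProperty T := fun X Y f =>
  ∃ d ∈ E, ∃ (hX : d.obj (n - 1) = X) (hY : S.obj (d.obj 0) = Y),
    f = eqToHom hX.symm ≫ d.phantom ≫ eqToHom hY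

/-- `f` is an `E`-inflation, i.e. the first morphism of some `n`-angle in `E`. -/
def IsInfl (E : Set (NSeq n T S)) {X Y : T} (f : X ⟶ Y) : Prop :=
  ∃ d ∈ E, ∃ (h0 : d.obj 0 = X) (h1 : d.obj 1 = Y),
    f = eqToHom h0.symm ≫ d.mor 0 ≫ eqToHom h1

/-- `f` is an `E`-deflation, i.e. the `(n-1)`-st morphism of some `n`-angle in `E`. -/
def IsDefl (E : Set (NSeq n T S)) {X Y : T} (f : X ⟶ Y) : Prop :=
  ∃ d ∈ E, ∃ (h0 : d.obj (n - 2) = X) (h1 : d.obj (n - 2 + 1) = Y),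
    f = eqToHom h0.symm ≫ d.mor (n - 2) ≫ eqToHom h1

/-- The ideal `E-proj` of `E`-projective morphisms of `A`: morphisms factoring
through every `E`-deflation with the appropriate target. -/
def EProj (A : Set T) (E : Set (NSeq n T S)) : MorphismProperty T := fun X Z f =>
  X ∈ A ∧ Z ∈ A ∧ ∀ ⦃P : T⦄ (p : P ⟶ Z), IsDefl E p → ∃ g : X ⟶ P, g ≫ p = f

/-- The ideal `E-inj` of `E`-injective morphisms of `A`: morphisms factoring
through every `E`-inflation with the appropriate source. -/
def EInj (A : Set T) (E : Set (NSeq n T S)) : MorphismProperty T := fun Z Y f =>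
  Z ∈ A ∧ Y ∈ A ∧ ∀ ⦃Q : T⦄ (m : Z ⟶ Q), IsInfl E m → ∃ g : Q ⟶ Y, m ≫ g = f

/-- An ideal in the full subcategory `A`: a class of morphisms of `A` closed under
sums of parallel morphisms and under composition with arbitrary morphisms of `A`. -/
structure IsIdeal (A : Set T) (I : MorphismProperty T) : Prop where
  src_mem : ∀ ⦃X Y : T⦄ (f : X ⟶ Y), I f → X ∈ A
  tgt_mem : ∀ ⦃X Y : T⦄ (f : X ⟶ Y), I f → Y ∈ A
  add_mem : ∀ ⦃X Y : T⦄ (f g : X ⟶ Y), I f → I g → I (f + g)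
  comp_mem : ∀ ⦃W X Y Z : T⦄ (f : W ⟶ X) (i : X ⟶ Y) (g : Y ⟶ Z),
    W ∈ A → Z ∈ A → I i → I (f ≫ i ≫ g)

/-- A phantom `A`-ideal: a class of morphisms `X → ΣB` with `X, B ∈ A`, closed under
sums and under `(Σg) ∘ φ ∘ f` for morphisms `f, g` of `A`. -/
structure IsPhantomIdeal (S : T ⥤ T) (A : Set T) (P : MorphismProperty T) : Prop where
  mem : ∀ ⦃X Y : T⦄ (φ : X ⟶ Y), P φ → X ∈ A ∧ ∃ B ∈ A, Y = S.obj B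
  add_mem : ∀ ⦃X Y : T⦄ (φ ψ : X ⟶ Y), P φ → P ψ → P (φ + ψ)
  comp_mem : ∀ ⦃X' X B B' : T⦄ (f : X' ⟶ X) (φ : X ⟶ S.obj B) (g : B ⟶ B'),
    X' ∈ A → X ∈ A → B ∈ A → B' ∈ A → P φ → P (f ≫ φ ≫ S.map g)

/-- `i` is an `I`-precover (of its target). -/
def IsPrecover (I : MorphismProperty T) {X A₀ : T} (i : X ⟶ A₀) : Prop :=
  I i ∧ ∀ ⦃X' : T⦄ (i' : X' ⟶ A₀), I i' → ∃ g : X' ⟶ X, g ≫ i = i'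

/-- `j` is an `I`-preenvelope (of its source). -/
def IsPreenvelope (I : MorphismProperty T) {B Y : T} (j : B ⟶ Y) : Prop :=
  I j ∧ ∀ ⦃Y' : T⦄ (j' : B ⟶ Y'), I j' → ∃ g : Y ⟶ Y', j ≫ g = j'

/-- The ideal `I` is precovering: every object of `A` has an `I`-precover. -/
def Precovering (A : Set T) (I : MorphismProperty T) : Prop :=
  ∀ A₀ ∈ A, ∃ (X : T) (i : X ⟶ A₀), IsPrecover I i

/-- The ideal `I` is preenveloping: every object of `A` has an `I`-preenvelope. -/
def Preenveloping (A : Set T) (I : MorphismProperty T) : Prop :=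
  ∀ B ∈ A, ∃ (Y : T) (j : B ⟶ Y), IsPreenvelope I j

/-- A phantom `A`-ideal `P` is precovering: every `ΣA₀` (`A₀ ∈ A`) has a `P`-precover. -/
def PhantPrecovering (S : T ⥤ T) (A : Set T) (P : MorphismProperty T) : Prop :=
  ∀ A₀ ∈ A, ∃ (X : T) (φ : X ⟶ S.obj A₀), IsPrecover P φ

/-- A phantom `A`-ideal `P` is preenveloping: every `B ∈ A` has a `P`-preenvelope. -/
def PhantPreenveloping (S : T ⥤ T) (A : Set T) (P : MorphismProperty T) : Prop :=
  ∀ B ∈ A, ∃ (Y : T) (φ : B ⟶ S.obj Y), IsPreenvelope P φ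

/-- There are enough `E`-injective morphisms: every object of `A` admits an
`E`-injective `E`-inflation out of it. -/
def EnoughInjectives (A : Set T) (E : Set (NSeq n T S)) : Prop :=
  ∀ A₀ ∈ A, ∃ (E₀ : T) (e : A₀ ⟶ E₀), IsInfl E e ∧ EInj A E e

/-- There are enough `E`-projective morphisms: every object of `A` admits an
`E`-projective `E`-deflation onto it. -/
def EnoughProjectives (A : Set T) (E : Set (NSeq n T S)) : Prop :=
  ∀ C ∈ A, ∃ (P : T) (p : P ⟶ C), IsDefl E p ∧ EProj A E p

/-- `f ⊥ g` with respect to `E`: `(Σg) φ f = 0` for all `E`-phantoms `φ`. -/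
def OrthRel (E : Set (NSeq n T S)) {X Z B Y : T} (f : X ⟶ Z) (g : B ⟶ Y) : Prop :=
  ∀ φ : Z ⟶ S.obj B, phant E φ → f ≫ φ ≫ S.map g = 0

/-- The right orthogonal ideal `M^⊥` (with respect to `E`) of a class of morphisms. -/
def perpRight (A : Set T) (E : Set (NSeq n T S)) (M : MorphismProperty T) :
    MorphismProperty T := fun B Y g =>
  B ∈ A ∧ Y ∈ A ∧ ∀ ⦃X Z : T⦄ (m : X ⟶ Z), M m → OrthRel E m g

/-- The left orthogonal ideal `⊥M` (with respect to `E`) of a class of morphisms. -/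
def perpLeft (A : Set T) (E : Set (NSeq n T S)) (M : MorphismProperty T) :
    MorphismProperty T := fun X Z f =>
  X ∈ A ∧ Z ∈ A ∧ ∀ ⦃B Y : T⦄ (m : B ⟶ Y), M m → OrthRel E f m

/-- `i : X ⟶ A₀` is a special `I`-precover with respect to `E`. -/
def IsSpecialPrecover (A : Set T) (E : Set (NSeq n T S)) (I : MorphismProperty T)
    {X A₀ : T} (i : X ⟶ A₀) : Prop :=
  I i ∧ ∃ d ∈ E, ∃ (hX : d.obj (n - 2) = X) (hA : d.obj (n - 2 + 1) = A₀),
    i = eqToHom hX.symm ≫ d.mor (n - 2) ≫ eqToHom hA ∧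
    ∃ (B : T) (φ : d.obj (n - 1) ⟶ S.obj B) (j : B ⟶ d.obj 0),
      phant E φ ∧ perpRight A E I j ∧ d.phantom = φ ≫ S.map j

/-- `j : B₀ ⟶ Y` is a special `J`-preenvelope with respect to `E`. -/
def IsSpecialPreenvelope (A : Set T) (E : Set (NSeq n T S)) (J : MorphismProperty T)
    {B₀ Y : T} (j : B₀ ⟶ Y) : Prop :=
  J j ∧ ∃ d ∈ E, ∃ (hB : d.obj 0 = B₀) (hY : d.obj 1 = Y),
    j = eqToHom hB.symm ≫ d.mor 0 ≫ eqToHom hY ∧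
    ∃ (C : T) (i : d.obj (n - 1) ⟶ C) (φ : C ⟶ S.obj (d.obj 0)),
      perpLeft A E J i ∧ phant E φ ∧ d.phantom = i ≫ φ

/-- The ideal `I` is special precovering with respect to `E`. -/
def SpecialPrecovering (A : Set T) (E : Set (NSeq n T S))
    (I : MorphismProperty T) : Prop :=
  ∀ A₀ ∈ A, ∃ (X : T) (i : X ⟶ A₀), IsSpecialPrecover A E I i

/-- The ideal `J` is special preenveloping with respect to `E`. -/
def SpecialPreenveloping (A : Set T) (E : Set (NSeq n T S))
    (J : MorphismProperty T) : Prop :=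
  ∀ B ∈ A, ∃ (Y : T) (j : B ⟶ Y), IsSpecialPreenvelope A E J j

/-- `(I, J)` is an ideal cotorsion pair with respect to `E`: `J = I^⊥` and `I = ⊥J`. -/
def IsIdealCotorsionPair (A : Set T) (E : Set (NSeq n T S))
    (I J : MorphismProperty T) : Prop :=
  J = perpRight A E I ∧ I = perpLeft A E J

/-- The ideal `Φ_E(F)` of `F`-phantoms relative to `E`. -/
def relPhant (A : Set T) (E F : Set (NSeq n T S)) : MorphismProperty T := fun X Z f =>
  X ∈ A ∧ Z ∈ A ∧ ∀ ⦃B : T⦄ (h : Z ⟶ S.obj B), phant E h → phant F (f ≫ h)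

/-- The ideal `Φ^E(F)` of `F`-cophantoms relative to `E`. -/
def relCophant (A : Set T) (E F : Set (NSeq n T S)) : MorphismProperty T := fun Z Y f =>
  Z ∈ A ∧ Y ∈ A ∧ ∀ ⦃W : T⦄ (h : W ⟶ Z), phant E (S.map h) → phant F (S.map (h ≫ f))

/-- The pullback almost `n`-exact structure `PB_E(I)` associated to an ideal `I`:
`n`-angles in `E` whose phantom factors as `ψ ∘ i` with `i ∈ I`, `ψ ∈ Φ(E)`. -/
def PB (E : Set (NSeq n T S)) (I : MorphismProperty T) : Set (NSeq n T S) :=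
  {d | d ∈ E ∧ ∃ (C : T) (i : d.obj (n - 1) ⟶ C) (ψ : C ⟶ S.obj (d.obj 0)),
    I i ∧ phant E ψ ∧ d.phantom = i ≫ ψ}

/-- The pushout almost `n`-exact structure `PO_E(J)` associated to an ideal `J`:
`n`-angles in `E` whose phantom factors as `(Σj) ∘ ψ` with `j ∈ J`, `ψ ∈ Φ(E)`. -/
def PO (E : Set (NSeq n T S)) (J : MorphismProperty T) : Set (NSeq n T S) :=
  {d | d ∈ E ∧ ∃ (B : T) (ψ : d.obj (n - 1) ⟶ S.obj B) (j : B ⟶ d.obj 0),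
    phant E ψ ∧ J j ∧ d.phantom = ψ ≫ S.map j}

/-- `E^I`: the `n`-angles from `A` whose phantom `φ` satisfies `(Σi) φ = 0` for
all `i ∈ I`. -/
def EUp (Ang : Set (NSeq n T S)) (A : Set T) (I : MorphismProperty T) :
    Set (NSeq n T S) :=
  {d | d ∈ DA Ang A ∧ ∀ ⦃Y : T⦄ (i : d.obj 0 ⟶ Y), I i → d.phantom ≫ S.map i = 0}

/-- `E_I`: the `n`-angles from `A` whose phantom `φ` satisfies `φ i = 0` for
all `i ∈ I`. -/
def EDown (Ang : Set (NSeq n T S)) (A : Set T) (I : MorphismProperty T) :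
    Set (NSeq n T S) :=
  {d | d ∈ DA Ang A ∧ ∀ ⦃X : T⦄ (i : X ⟶ d.obj (n - 1)), I i → i ≫ d.phantom = 0}

/-- `D_A(P)`: the `n`-angles from `A` whose phantom lies in `P`. -/
def DAI (Ang : Set (NSeq n T S)) (A : Set T) (P : MorphismProperty T) :
    Set (NSeq n T S) :=
  {d | d ∈ DA Ang A ∧ P d.phantom}

/-- `e : A₀ ⟶ E₀` is a special `H`-injective morphism with respect to `E`: it is
`H`-injective and embeds as the first morphism of an `n`-angle from `A` admitting a
morphism of `n`-angles, with identity ends, to an `n`-angle in `E` whose component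
at position `n` lies in `Φ_E(H)`. -/
def IsSpecialInj (Ang : Set (NSeq n T S)) (A : Set T) (E H : Set (NSeq n T S))
    {A₀ E₀ : T} (e : A₀ ⟶ E₀) : Prop :=
  EInj A H e ∧ ∃ d' ∈ DA Ang A, ∃ (h0 : d'.obj 0 = A₀) (h1 : d'.obj 1 = E₀),
    e = eqToHom h0.symm ≫ d'.mor 0 ≫ eqToHom h1 ∧
    ∃ d ∈ E, ∃ (φ : NSeqHom d' d) (hh : d'.obj 0 = d.obj 0),
      φ.app 0 = eqToHom hh ∧ relPhant A E H (φ.app (n - 1))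

/-- `p : P₀ ⟶ C` is a special `H`-projective morphism with respect to `E` (dual of
`IsSpecialInj`). -/
def IsSpecialProj (Ang : Set (NSeq n T S)) (A : Set T) (E H : Set (NSeq n T S))
    {P₀ C : T} (p : P₀ ⟶ C) : Prop :=
  EProj A H p ∧ ∃ d' ∈ DA Ang A, ∃ (h0 : d'.obj (n - 2) = P₀) (h1 : d'.obj (n - 2 + 1) = C),
    p = eqToHom h0.symm ≫ d'.mor (n - 2) ≫ eqToHom h1 ∧
    ∃ d ∈ E, ∃ (φ : NSeqHom d d') (hh : d.obj (n - 1) = d'.obj (n - 1)),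
      φ.app (n - 1) = eqToHom hh ∧ relCophant A E H (φ.app 0)

/-- There are enough special `H`-injective morphisms (with respect to `E`). -/
def EnoughSpecialInj (Ang : Set (NSeq n T S)) (A : Set T)
    (E H : Set (NSeq n T S)) : Prop :=
  ∀ A₀ ∈ A, ∃ (E₀ : T) (e : A₀ ⟶ E₀), IsSpecialInj Ang A E H e

/-- There are enough special `H`-projective morphisms (with respect to `E`). -/
def EnoughSpecialProj (Ang : Set (NSeq n T S)) (A : Set T)
    (E H : Set (NSeq n T S)) : Prop :=
  ∀ C ∈ A, ∃ (P₀ : T) (p : P₀ ⟶ C), IsSpecialProj Ang A E H p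

end Defs


end IdealApprox


open IdealApprox

namespace IdealApprox

section RotAux

set_option linter.unusedSectionVars false

variable {n : ℕ} {T : Type u} [Category.{v} T] [Preadditive T] [HasZeroObject T]
  [HasBinaryBiproducts T] {S : T ⥤ T}

/-- Objects of the left rotation. -/
def rotObj (d : NSeq n T S) (i : ℕ) : T :=
  if i + 2 ≤ n then d.obj (i + 1) else S.obj (d.obj (i + 1 - n))

lemma rotObj_low (d : NSeq n T S) {i : ℕ} (h : i + 2 ≤ n) :
    rotObj (S := S) d i = d.obj (i + 1) := if_pos h

lemma rotObj_high (d : NSeq n T S) {i : ℕ} (h : ¬ i + 2 ≤ n) :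
    rotObj (S := S) d i = S.obj (d.obj (i + 1 - n)) := if_neg h

/-- Morphisms of the left rotation. -/
def rotMor (hn : 3 ≤ n) (d : NSeq n T S) (i : ℕ) :
    rotObj (S := S) d i ⟶ rotObj (S := S) d (i + 1) :=
  if h : i + 3 ≤ n then
    eqToHom (rotObj_low d (by omega)) ≫ d.mor (i + 1) ≫
      eqToHom (rotObj_low d (by omega : i + 1 + 2 ≤ n)).symm
  else if h2 : i + 2 = n then
    eqToHom ((rotObj_low d (by omega)).trans (congrArg d.obj (by omega : i + 1 = n - 1))) ≫
      d.phantom ≫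
      eqToHom (((rotObj_high d (by omega)).trans
        (congrArg S.obj (congrArg d.obj (by omega : i + 1 + 1 - n = 0)))).symm)
  else 0

/-- The left rotation of an `n`-`Σ`-sequence. -/
def rot (hn : 3 ≤ n) (d : NSeq n T S) : NSeq n T S where
  obj := rotObj d
  mor := rotMor hn d
  phantom :=
    eqToHom ((rotObj_high d (by omega)).trans
        (congrArg S.obj (congrArg d.obj (by omega : n - 1 + 1 - n = 0)))) ≫
      ((-1 : ℤ) ^ n • S.map (d.mor 0)) ≫
      eqToHom (congrArg S.obj (rotObj_low d (by omega : 0 + 2 ≤ n)).symm)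

lemma rot_obj (hn : 3 ≤ n) (d : NSeq n T S) (i : ℕ) : (rot hn d).obj i = rotObj d i := rfl

lemma isLeftRotation_rot (hn : 3 ≤ n) (d : NSeq n T S) : IsLeftRotation d (rot hn d) := by
  refine ⟨hn, fun i h => rotObj_low d h,
    (rotObj_high d (by omega)).trans
      (congrArg S.obj (congrArg d.obj (by omega : n - 1 + 1 - n = 0))), ?_, ?_, ?_⟩
  · intro i h3
    show rotMor hn d i = _
    rw [rotMor, dif_pos h3]
    rfl
  · show rotMor hn d (n - 2) = _
    rw [rotMor, dif_neg (by omega), dif_pos (by omega : n - 2 + 2 = n)]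
    rfl
  · rfl

lemma rot_iter_mem (hn : 3 ≤ n) {Ang : Set (NSeq n T S)} (hAng : IsNAngulated Ang)
    (k : ℕ) : ∀ d : NSeq n T S, d ∈ Ang ↔ (rot hn)^[k] d ∈ Ang := by
  induction k with
  | zero => intro d; rfl
  | succ k ih =>
    intro d
    rw [Function.iterate_succ_apply]
    exact (hAng.rotate d (rot hn d) (isLeftRotation_rot hn d)).trans (ih (rot hn d))

lemma iter_obj_low (hn : 3 ≤ n) (k : ℕ) :
    ∀ (d : NSeq n T S) (i : ℕ), i + k + 1 ≤ n → ((rot hn)^[k] d).obj i = d.obj (i + k) := by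
  induction k with
  | zero => intro d i _; rfl
  | succ k ih =>
    intro d i h
    rw [Function.iterate_succ_apply, ih (rot hn d) i (by omega)]
    show rotObj d (i + k) = _
    rw [rotObj_low d (by omega)]
    congr 1

lemma iter_obj_high (hn : 3 ≤ n) (k : ℕ) :
    ∀ (d : NSeq n T S) (i : ℕ), i + 1 ≤ n → n ≤ i + k → i + k ≤ 2 * n - 2 →
      ((rot hn)^[k] d).obj i = S.obj (d.obj (i + k - n)) := by
  induction k with
  | zero => intro d i h1 h2 _; exact absurd h2 (by omega)
  | succ k ih =>
    intro d i h1 h2 h3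
    rw [Function.iterate_succ_apply]
    by_cases hc : n ≤ i + k
    · rw [ih (rot hn d) i h1 hc (by omega)]
      show S.obj (rotObj d (i + k - n)) = _
      rw [rotObj_low d (by omega)]
      congr 2 <;> omega
    · rw [iter_obj_low hn k (rot hn d) i (by omega)]
      show rotObj d (i + k) = _
      rw [rotObj_high d (by omega)]
      congr 2 <;> omega

lemma mor_congr (d : NSeq n T S) {a b : ℕ} (h : a = b) :
    d.mor a = eqToHom (congrArg d.obj h) ≫ d.mor b ≫
      eqToHom (congrArg d.obj (congrArg (· + 1) h)).symm := by
  subst h; simp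

lemma iter_mor_low (hn : 3 ≤ n) (k : ℕ) :
    ∀ (d : NSeq n T S) (i : ℕ) (h : i + k + 2 ≤ n),
      ((rot hn)^[k] d).mor i =
        eqToHom (iter_obj_low hn k d i (by omega)) ≫ d.mor (i + k) ≫
          eqToHom ((iter_obj_low hn k d (i + 1) (by omega)).trans
            (congrArg d.obj (by omega : i + 1 + k = i + k + 1))).symm := by
  induction k with
  | zero =>
    intro d i h
    simp
    exact (Category.id_comp _).symm
  | succ k ih =>
    intro d i h
    show ((rot hn)^[k] (rot hn d)).mor i = _
    rw [ih (rot hn d) i (by omega)]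
    have hmm : (rot hn d).mor (i + k) = rotMor hn d (i + k) := rfl
    rw [hmm, rotMor, dif_pos (by omega : i + k + 3 ≤ n)]
    dsimp only [rot_obj]
    simp only [eqToHom_trans, eqToHom_trans_assoc, Category.assoc]
    erw [eqToHom_trans_assoc, eqToHom_trans]
    rfl

lemma iter_mor_phantom (hn : 3 ≤ n) (k : ℕ) (d : NSeq n T S) (i : ℕ)
    (h : i + k + 1 = n) (hi : i + 2 ≤ n) :
    ((rot hn)^[k] d).mor i =
      eqToHom ((iter_obj_low hn k d i (by omega)).trans
        (congrArg d.obj (by omega : i + k = n - 1))) ≫ d.phantom ≫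
      eqToHom (((iter_obj_high hn k d (i + 1) (by omega) (by omega) (by omega)).trans
        (congrArg S.obj (congrArg d.obj (by omega : i + 1 + k - n = 0)))).symm) := by
  obtain ⟨k, rfl⟩ : ∃ k', k = k' + 1 := ⟨k - 1, by omega⟩
  show ((rot hn)^[k] (rot hn d)).mor i = _
  rw [iter_mor_low hn k (rot hn d) i (by omega)]
  have hmm : (rot hn d).mor (i + k) = rotMor hn d (i + k) := rfl
  rw [hmm, rotMor, dif_neg (by omega), dif_pos (by omega : i + k + 2 = n)]
  dsimp only [rot_obj]
  simp [eqToHom_trans, eqToHom_trans_assoc, Category.assoc]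
  erw [eqToHom_trans_assoc, eqToHom_trans]

lemma iter_mor_high (hn : 3 ≤ n) (k : ℕ) :
    ∀ (d : NSeq n T S) (i : ℕ) (h1 : i + 2 ≤ n) (h2 : n ≤ i + k) (h3 : i + k + 3 ≤ 2 * n),
      ((rot hn)^[k] d).mor i =
        eqToHom (iter_obj_high hn k d i (by omega) (by omega) (by omega)) ≫
          ((-1 : ℤ) ^ n • S.map (d.mor (i + k - n))) ≫
          eqToHom (((iter_obj_high hn k d (i + 1) (by omega) (by omega) (by omega)).trans
            (congrArg S.obj (congrArg d.obj
              (by omega : i + 1 + k - n = i + k - n + 1)))).symm) := by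
  induction k with
  | zero => intro d i h1 h2 _; exact absurd h2 (by omega)
  | succ k ih =>
    intro d i h1 h2 h3
    show ((rot hn)^[k] (rot hn d)).mor i = _
    by_cases hc : n ≤ i + k
    · rw [ih (rot hn d) i h1 hc (by omega)]
      have hmm : (rot hn d).mor (i + k - n) = rotMor hn d (i + k - n) := rfl
      rw [hmm, rotMor, dif_pos (by omega : i + k - n + 3 ≤ n)]
      rw [mor_congr d (by omega : i + k - n + 1 = i + (k + 1) - n)]
      simp [eqToHom_trans, eqToHom_trans_assoc, Category.assoc, eqToHom_map,
        Functor.map_comp, Preadditive.comp_zsmul, Preadditive.zsmul_comp]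
      congr 1
      erw [Functor.map_comp, Functor.map_comp, eqToHom_map, eqToHom_map]
      simp only [Category.assoc]
      erw [eqToHom_trans_assoc, eqToHom_trans]
    · rw [iter_mor_phantom hn k (rot hn d) i (by omega) h1]
      have hmm : (rot hn d).phantom =
          eqToHom ((rotObj_high d (by omega)).trans
            (congrArg S.obj (congrArg d.obj (by omega : n - 1 + 1 - n = 0)))) ≫
          ((-1 : ℤ) ^ n • S.map (d.mor 0)) ≫
          eqToHom (congrArg S.obj (rotObj_low d (by omega : 0 + 2 ≤ n)).symm) := rfl
      rw [hmm]
      rw [mor_congr d (by omega : i + (k + 1) - n = 0)]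
      dsimp only [rot_obj]
      simp [eqToHom_trans, eqToHom_trans_assoc, Category.assoc, eqToHom_map,
        Functor.map_comp, Preadditive.comp_zsmul, Preadditive.zsmul_comp]
      erw [eqToHom_trans_assoc, eqToHom_trans]
      erw [eqToHom_trans_assoc, eqToHom_trans]

lemma iter_phantom (hn : 3 ≤ n) (k : ℕ) :
    ∀ (d : NSeq n T S) (h1 : 1 ≤ k) (h2 : k ≤ n - 2),
      ((rot hn)^[k] d).phantom =
        eqToHom ((iter_obj_high hn k d (n - 1) (by omega) (by omega) (by omega)).trans
          (congrArg S.obj (congrArg d.obj (by omega : n - 1 + k - n = k - 1)))) ≫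
          ((-1 : ℤ) ^ n • S.map (d.mor (k - 1))) ≫
          eqToHom (congrArg S.obj (((congrArg d.obj (by omega : k - 1 + 1 = 0 + k)).trans
            (iter_obj_low hn k d 0 (by omega)).symm))) := by
  induction k with
  | zero => intro d h1 _; exact absurd h1 (by omega)
  | succ k ih =>
    intro d _ h2
    show ((rot hn)^[k] (rot hn d)).phantom = _
    by_cases hk : 1 ≤ k
    · rw [ih (rot hn d) hk (by omega)]
      have hmm : (rot hn d).mor (k - 1) = rotMor hn d (k - 1) := rfl
      rw [hmm, rotMor, dif_pos (by omega : k - 1 + 3 ≤ n)]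
      rw [mor_congr d (by omega : k - 1 + 1 = k + 1 - 1)]
      simp [eqToHom_trans, eqToHom_trans_assoc, Category.assoc, eqToHom_map,
        Functor.map_comp, Preadditive.comp_zsmul, Preadditive.zsmul_comp]
      congr 1
      erw [Functor.map_comp, Functor.map_comp, eqToHom_map, eqToHom_map]
      simp only [Category.assoc]
      erw [eqToHom_trans_assoc, eqToHom_trans]
    · have hk0 : k = 0 := by omega
      subst hk0
      show (rot hn d).phantom = _
      have hmm : (rot hn d).phantom =
          eqToHom ((rotObj_high d (by omega)).trans
            (congrArg S.obj (congrArg d.obj (by omega : n - 1 + 1 - n = 0)))) ≫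
          ((-1 : ℤ) ^ n • S.map (d.mor 0)) ≫
          eqToHom (congrArg S.obj (rotObj_low d (by omega : 0 + 2 ≤ n)).symm) := rfl
      rw [hmm]
      rfl

lemma zsmul_neg_one_pow_cancel {X Y : T} {x y : X ⟶ Y} (m : ℕ)
    (h : ((-1 : ℤ) ^ m) • x = ((-1 : ℤ) ^ m) • y) : x = y := by
  have h2 := congrArg (fun z => ((-1 : ℤ) ^ m) • z) h
  simpa [smul_smul, ← mul_pow] using h2

end RotAux

section MainAux

set_option linter.unusedSectionVars false

variable {T : Type u} [Category.{v} T] [Preadditive T] [HasZeroObject T]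
  [HasBinaryBiproducts T] {S : T ⥤ T} {n : ℕ}

lemma app_congr {d e : NSeq n T S} (ψ : NSeqHom d e) {a b : ℕ} (h : a = b) :
    ψ.app a = eqToHom (congrArg d.obj h) ≫ ψ.app b ≫
      eqToHom (congrArg e.obj h).symm := by
  subst h; simp

/-- If there are enough `E`-injective morphisms and `E-inj ⊆ F-inj`, then `F ⊆ E`. -/
lemma subset_of_inj_le (hn : 3 ≤ n) {Ang : Set (NSeq n T S)} (hAng : IsNAngulated Ang)
    {A : Set T} {E F : Set (NSeq n T S)} (hE : IsAlmostNExact Ang A E)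
    (hF : IsAlmostNExact Ang A F) (hEI : EnoughInjectives A E)
    (hle : EInj A E ≤ EInj A F) : F ⊆ E := by
  intro d hdF
  have hdDA : d ∈ DA Ang A := hF.subset_DA hdF
  obtain ⟨E₀, e, hinfl, hinj⟩ := hEI (d.obj 0) (hdDA.2 0 (by omega))
  obtain ⟨d', hd'E, h0, h1, he⟩ := hinfl
  obtain ⟨g, hg⟩ := (hle _ hinj).2.2 (d.mor 0) ⟨d, hdF, rfl, rfl, by simp⟩
  obtain ⟨φ, hφ0, hφ1, -⟩ := hAng.fill d d' hdDA.1 (hE.subset_DA hd'E).1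
    (eqToHom h0.symm) (g ≫ eqToHom h1.symm) (by
      rw [he] at hg
      rw [← Category.assoc, hg]
      simp)
  exact hE.base_change d' hd'E d hdDA φ h0.symm (by rw [hφ0])

/-- If there are enough `E`-projective morphisms and `E-proj ⊆ F-proj`, then `F ⊆ E`. -/
lemma subset_of_proj_le [S.IsEquivalence] (hn : 3 ≤ n)
    {Ang : Set (NSeq n T S)} (hAng : IsNAngulated Ang)
    {A : Set T} {E F : Set (NSeq n T S)} (hE : IsAlmostNExact Ang A E)
    (hF : IsAlmostNExact Ang A F) (hEP : EnoughProjectives A E)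
    (hle : EProj A E ≤ EProj A F) : F ⊆ E := by
  intro d hdF
  have hdDA : d ∈ DA Ang A := hF.subset_DA hdF
  obtain ⟨P, p, hdefl, hproj⟩ := hEP (d.obj (n - 2 + 1)) (hdDA.2 (n - 2 + 1) (by omega))
  obtain ⟨d', hd'E, h0, h1, hp⟩ := hdefl
  have hd'DA : d' ∈ DA Ang A := hE.subset_DA hd'E
  obtain ⟨g, hg⟩ := (hle _ hproj).2.2 (d.mor (n - 2)) ⟨d, hdF, rfl, rfl, by simp⟩
  have hdR : (rot hn)^[n - 2] d ∈ Ang := (rot_iter_mem hn hAng (n - 2) d).mp hdDA.1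
  have hd'R : (rot hn)^[n - 2] d' ∈ Ang := (rot_iter_mem hn hAng (n - 2) d').mp hd'DA.1
  have hO0 : ∀ X : NSeq n T S, ((rot hn)^[n - 2] X).obj 0 = X.obj (n - 2) := fun X =>
    (iter_obj_low hn (n - 2) X 0 (by omega)).trans (congrArg X.obj (by omega))
  have hO1 : ∀ X : NSeq n T S, ((rot hn)^[n - 2] X).obj 1 = X.obj (n - 2 + 1) := fun X =>
    (iter_obj_low hn (n - 2) X 1 (by omega)).trans (congrArg X.obj (by omega))
  have hOH : ∀ (X : NSeq n T S) (i : ℕ), i + 3 ≤ n →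
      ((rot hn)^[n - 2] X).obj (i + 2) = S.obj (X.obj i) := fun X i h =>
    (iter_obj_high hn (n - 2) X (i + 2) (by omega) (by omega) (by omega)).trans
      (congrArg S.obj (congrArg X.obj (by omega)))
  obtain ⟨ψ, hψ0, hψ1, -⟩ := hAng.fill ((rot hn)^[n - 2] d') ((rot hn)^[n - 2] d) hd'R hdR
    (eqToHom (hO0 d') ≫ eqToHom h0 ≫ g ≫ eqToHom (hO0 d).symm)
    (eqToHom ((hO1 d').trans (h1.trans (hO1 d).symm))) (by
      rw [hp] at hg
      rw [iter_mor_low hn (n - 2) d 0 (by omega), iter_mor_low hn (n - 2) d' 0 (by omega),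
        mor_congr d (by omega : 0 + (n - 2) = n - 2),
        mor_congr d' (by omega : 0 + (n - 2) = n - 2)]
      simp only [Category.assoc, eqToHom_trans, eqToHom_trans_assoc, eqToHom_refl,
        Category.id_comp, Category.comp_id]
      rw [reassoc_of% hg]
      simp)
  have h1' : d'.obj (n - 1) = d.obj (n - 1) := by
    have h2 := h1
    rwa [show n - 2 + 1 = n - 1 from by omega] at h2
  refine hE.cobase_change d' hd'E d hdDA ⟨fun i =>
    if h : i + 3 ≤ n then
      S.preimage (eqToHom (hOH d' i h).symm ≫ ψ.app (i + 2) ≫ eqToHom (hOH d i h))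
    else if h2 : i + 2 = n then
      eqToHom ((congrArg d'.obj (by omega : i = n - 2)).trans (hO0 d').symm) ≫ ψ.app 0 ≫
        eqToHom ((hO0 d).trans (congrArg d.obj (by omega : n - 2 = i)))
    else if h3 : i + 1 = n then
      eqToHom ((congrArg d'.obj (by omega : i = n - 2 + 1)).trans (hO1 d').symm) ≫ ψ.app 1 ≫
        eqToHom ((hO1 d).trans (congrArg d.obj (by omega : n - 2 + 1 = i)))
    else 0, ?_, ?_⟩ h1' ?_
  · -- comm
    intro i hi
    by_cases hc1 : i + 4 ≤ n
    · rw [dif_pos (by omega : i + 3 ≤ n), dif_pos (by omega : i + 1 + 3 ≤ n)]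
      apply S.map_injective
      simp only [Functor.map_comp, Functor.map_preimage]
      have hc := ψ.comm (i + 2) (by omega)
      rw [iter_mor_high hn (n - 2) d (i + 2) (by omega) (by omega) (by omega),
          iter_mor_high hn (n - 2) d' (i + 2) (by omega) (by omega) (by omega),
          mor_congr d (by omega : i + 2 + (n - 2) - n = i),
          mor_congr d' (by omega : i + 2 + (n - 2) - n = i)] at hc
      simp only [Category.assoc, eqToHom_trans, eqToHom_trans_assoc, eqToHom_refl,
        Category.id_comp, Category.comp_id, Functor.map_comp, eqToHom_map,
        Preadditive.comp_zsmul, Preadditive.zsmul_comp] at hc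
      have hc' := zsmul_neg_one_pow_cancel n hc
      have key := congrArg (fun z =>
        eqToHom ((hOH d' i (by omega)).symm.trans
          (congrArg ((rot hn)^[n - 2] d').obj (by omega : i + 2 = i + 2))) ≫ z ≫
        eqToHom ((congrArg ((rot hn)^[n - 2] d).obj (by omega : i + 2 + 1 = i + 1 + 2)).trans
          (hOH d (i + 1) (by omega)))) hc'
      simpa only [Category.assoc, eqToHom_trans, eqToHom_trans_assoc, eqToHom_refl,
        Category.id_comp, Category.comp_id] using key
    · by_cases hc2 : i + 3 = n
      · rw [dif_pos (by omega : i + 3 ≤ n), dif_neg (by omega : ¬ i + 1 + 3 ≤ n),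
          dif_pos (by omega : i + 1 + 2 = n)]
        apply S.map_injective
        simp only [Functor.map_comp, Functor.map_preimage, eqToHom_map]
        have hc := ψ.comm_phantom
        rw [iter_phantom hn (n - 2) d (by omega) (by omega),
            iter_phantom hn (n - 2) d' (by omega) (by omega),
            mor_congr d (by omega : n - 2 - 1 = i),
            mor_congr d' (by omega : n - 2 - 1 = i)] at hc
        simp only [Category.assoc, eqToHom_trans, eqToHom_trans_assoc, eqToHom_refl,
          Category.id_comp, Category.comp_id, Functor.map_comp, eqToHom_map,
          Preadditive.comp_zsmul, Preadditive.zsmul_comp] at hc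
        have hc' := zsmul_neg_one_pow_cancel n hc
        rw [app_congr ψ (by omega : i + 2 = n - 1)]
        have key := congrArg (fun z =>
          eqToHom ((hOH d' i (by omega)).symm.trans
            (congrArg ((rot hn)^[n - 2] d').obj (by omega : i + 2 = n - 1))) ≫ z ≫
          eqToHom (congrArg S.obj ((hO0 d).trans
            (congrArg d.obj (by omega : n - 2 = i + 1))))) hc'
        simpa only [Category.assoc, eqToHom_trans, eqToHom_trans_assoc, eqToHom_refl,
          Category.id_comp, Category.comp_id] using key
      · -- i + 2 = n
        have hc2' : i + 2 = n := by omega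
        rw [dif_neg (by omega : ¬ i + 3 ≤ n), dif_pos hc2',
          dif_neg (by omega : ¬ i + 1 + 3 ≤ n), dif_neg (by omega : ¬ i + 1 + 2 = n),
          dif_pos (by omega : i + 1 + 1 = n)]
        have hc := ψ.comm 0 (by omega)
        rw [iter_mor_low hn (n - 2) d 0 (by omega), iter_mor_low hn (n - 2) d' 0 (by omega),
          mor_congr d (by omega : 0 + (n - 2) = i),
          mor_congr d' (by omega : 0 + (n - 2) = i)] at hc
        simp only [Category.assoc, eqToHom_trans, eqToHom_trans_assoc, eqToHom_refl,
          Category.id_comp, Category.comp_id] at hc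
        have key := congrArg (fun z =>
          eqToHom ((congrArg d'.obj (by omega : i = n - 2)).trans (hO0 d').symm) ≫ z ≫
          eqToHom ((hO1 d).trans (congrArg d.obj (by omega : n - 2 + 1 = i + 1)))) hc
        simpa only [Category.assoc, eqToHom_trans, eqToHom_trans_assoc, eqToHom_refl,
          Category.id_comp, Category.comp_id] using key
  · -- comm_phantom
    rw [dif_neg (by omega : ¬ n - 1 + 3 ≤ n), dif_neg (by omega : ¬ n - 1 + 2 = n),
      dif_pos (by omega : n - 1 + 1 = n), dif_pos (by omega : 0 + 3 ≤ n)]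
    simp only [Functor.map_comp, Functor.map_preimage, eqToHom_map]
    have hc := ψ.comm 1 (by omega)
    rw [iter_mor_phantom hn (n - 2) d 1 (by omega) (by omega),
        iter_mor_phantom hn (n - 2) d' 1 (by omega) (by omega)] at hc
    simp only [Category.assoc, eqToHom_trans, eqToHom_trans_assoc, eqToHom_refl,
      Category.id_comp, Category.comp_id] at hc
    have key := congrArg (fun z =>
      eqToHom ((congrArg d'.obj (by omega : n - 1 = n - 2 + 1)).trans (hO1 d').symm) ≫ z ≫
      eqToHom (hOH d 0 (by omega))) hc
    simpa only [Category.assoc, eqToHom_trans, eqToHom_trans_assoc, eqToHom_refl,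
      Category.id_comp, Category.comp_id] using key
  · -- app (n-1) = eqToHom h1'
    dsimp only
    rw [dif_neg (by omega : ¬ n - 1 + 3 ≤ n), dif_neg (by omega : ¬ n - 1 + 2 = n),
      dif_pos (by omega : n - 1 + 1 = n), hψ1]
    simp

end MainAux

end IdealApprox


/-- Comparison of almost `n`-exact structures via their injectives/projectives. -/
theorem stmt_13 {T : Type u} [Category.{v} T] [Preadditive T] [HasZeroObject T]
    [HasBinaryBiproducts T] (S : T ⥤ T) [S.IsEquivalence] {n : ℕ} (hn : 3 ≤ n)
    (Ang : Set (NSeq n T S)) (hAng : IsNAngulated Ang)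
    (A : Set T) (hA : ClosedUnderExtensions Ang A)
    (E : Set (NSeq n T S)) (hE : IsAlmostNExact Ang A E)
    (F : Set (NSeq n T S)) (hF : IsAlmostNExact Ang A F) :
    (EnoughInjectives A E → (F ⊆ E ↔ EInj A E ≤ EInj A F)) ∧
    (EnoughProjectives A E → (F ⊆ E ↔ EProj A E ≤ EProj A F)) := by
  constructor
  · intro hEI
    constructor
    · intro hFE X Y f hf
      exact ⟨hf.1, hf.2.1, fun Q m hm => hf.2.2 m
        (by obtain ⟨d, hd, rest⟩ := hm; exact ⟨d, hFE hd, rest⟩)⟩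
    · intro hle
      exact subset_of_inj_le hn hAng hE hF hEI hle
  · intro hEP
    constructor
    · intro hFE X Y f hf
      exact ⟨hf.1, hf.2.1, fun Q m hm => hf.2.2 m
        (by obtain ⟨d, hd, rest⟩ := hm; exact ⟨d, hFE hd, rest⟩)⟩
    · intro hle
      exact subset_of_proj_le hn hAng hE hF hEP hle
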